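/- (Closed range corollary) Assume that range(B1*) is a closed subspace of H2. If (a) there exists C > 0 with ‖A1* h4‖ ≤ C ‖B1* h4‖ for all h4 ∈ H4, and (b) for all h4 ∈ H4, h5 ∈ H5, B1* h4 + B2* h5 = 0 implies A1* h4 + A2* h5 = 0, then for every h1 ∈ H1 and every ε > 0 there exists h2 ∈ H2 such that A1 h1 = B1 h2 and ‖A2 h1 − B2 h2‖ ≤ ε. -/

import Mathlib

open ContinuousLinearMap

/-- Closed range corollary: if `R(B1*)` is closed, the necessary conditions
are sufficient for the mixed goal. -/
theorem sufficiency_under_closed_range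
    {H1 H2 H4 H5 : Type*}
    [NormedAddCommGroup H1] [InnerProductSpace ℝ H1] [CompleteSpace H1]
    [NormedAddCommGroup H2] [InnerProductSpace ℝ H2] [CompleteSpace H2]
    [NormedAddCommGroup H4] [InnerProductSpace ℝ H4] [CompleteSpace H4]
    [NormedAddCommGroup H5] [InnerProductSpace ℝ H5] [CompleteSpace H5]
    (A1 : H1 →L[ℝ] H4) (A2 : H1 →L[ℝ] H5)
    (B1 : H2 →L[ℝ] H4) (B2 : H2 →L[ℝ] H5)
    (hclosed : IsClosed (Set.range (adjoint B1)))
    (ha : ∃ C : ℝ, 0 < C ∧ ∀ h4 : H4, ‖adjoint A1 h4‖ ≤ C * ‖adjoint B1 h4‖)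
    (hb : ∀ (h4 : H4) (h5 : H5), adjoint B1 h4 + adjoint B2 h5 = 0 →
      adjoint A1 h4 + adjoint A2 h5 = 0) :
    ∀ h1 : H1, ∀ ε : ℝ, 0 < ε →
      ∃ h2 : H2, A1 h1 = B1 h2 ∧ ‖A2 h1 - B2 h2‖ ≤ ε := by
  obtain ⟨C, hC, hCb⟩ := ha
  -- well-definedness
  have hwd : ∀ y y' : H4, adjoint B1 y = adjoint B1 y' → adjoint A1 y = adjoint A1 y' := by
    intro y y' h
    have h0 : adjoint B1 (y - y') = 0 := by rw [map_sub, h, sub_self]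
    have := hCb (y - y')
    rw [h0, norm_zero, mul_zero] at this
    have : adjoint A1 (y - y') = 0 := norm_le_zero_iff.mp this
    rw [map_sub, sub_eq_zero] at this
    exact this
  set K : Submodule ℝ H2 := LinearMap.range ((adjoint B1 : H4 →L[ℝ] H2) : H4 →ₗ[ℝ] H2) with hK
  have hKclosed : IsClosed (K : Set H2) := by
    rw [hK]
    exact hclosed
  haveI : CompleteSpace K := hKclosed.completeSpace_coe
  -- the densely... the map D on K
  classical
  have hchoose : ∀ k : K, adjoint B1 (Classical.choose k.2) = (k : H2) := fun k =>
    Classical.choose_spec k.2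
  let F : K → H1 := fun k => adjoint A1 (Classical.choose k.2)
  have hF : ∀ (k : K) (y : H4), adjoint B1 y = (k : H2) → F k = adjoint A1 y := by
    intro k y hy
    exact hwd _ _ (by rw [hchoose k, hy])
  let Flin : K →ₗ[ℝ] H1 :=
    { toFun := F
      map_add' := by
        intro a b
        have : adjoint B1 (Classical.choose a.2 + Classical.choose b.2) = ((a + b : K) : H2) := by
          rw [map_add, hchoose a, hchoose b]; rfl
        show F (a + b) = F a + F b
        rw [hF _ _ this, map_add]
      map_smul' := by
        intro c a
        have : adjoint B1 (c • Classical.choose a.2) = ((c • a : K) : H2) := by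
          rw [map_smul, hchoose a]; rfl
        show F (c • a) = c • F a
        rw [hF _ _ this, map_smul] }
  have hFbound : ∀ k : K, ‖Flin k‖ ≤ C * ‖k‖ := by
    intro k
    have := hCb (Classical.choose k.2)
    rwa [hchoose k] at this
  let Fc : K →L[ℝ] H1 := Flin.mkContinuous C hFbound
  let D : H2 →L[ℝ] H1 := Fc.comp K.orthogonalProjectionOnto
  have hD : ∀ y : H4, D (adjoint B1 y) = adjoint A1 y := by
    intro y
    have hmem : adjoint B1 y ∈ K := ⟨y, rfl⟩
    have hproj : K.orthogonalProjectionOnto (adjoint B1 y) = ⟨adjoint B1 y, hmem⟩ :=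
      Submodule.orthogonalProjectionOnto_mem_subspace_eq_self (⟨adjoint B1 y, hmem⟩ : K)
    show Fc (K.orthogonalProjectionOnto (adjoint B1 y)) = adjoint A1 y
    rw [hproj]
    exact hF _ _ rfl
  have hadj : adjoint A1 = D.comp (adjoint B1) := by
    ext y
    exact (hD y).symm
  have hA1 : A1 = B1.comp (adjoint D) := by
    have := congrArg adjoint hadj
    rwa [adjoint_adjoint, adjoint_comp, adjoint_adjoint] at this
  -- kernel/orthogonality facts
  have hker : LinearMap.ker (B1 : H2 →ₗ[ℝ] H4) = Kᗮ := by
    ext x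
    simp only [LinearMap.mem_ker, Submodule.mem_orthogonal]
    constructor
    · rintro hx u ⟨y, rfl⟩
      rw [ContinuousLinearMap.coe_coe, adjoint_inner_left]
      show inner ℝ y ((B1 : H2 →ₗ[ℝ] H4) x) = 0
      rw [hx, inner_zero_right]
    · intro h
      have := h (adjoint B1 (B1 x)) ⟨B1 x, rfl⟩
      rw [adjoint_inner_left] at this
      exact inner_self_eq_zero.mp this
  have hKtc : K.topologicalClosure = K :=
    SetLike.coe_injective (by rw [Submodule.topologicalClosure_coe, hKclosed.closure_eq])
  have hkerorth : (LinearMap.ker (B1 : H2 →ₗ[ℝ] H4) : Submodule ℝ H2)ᗮ = K := by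
    rw [hker, Submodule.orthogonal_orthogonal_eq_closure, hKtc]
  -- main part
  intro h1 ε hε
  set h20 : H2 := adjoint D h1 with hh20
  have hB1h20 : B1 h20 = A1 h1 := by rw [hA1]; rfl
  set V : Submodule ℝ H5 := (LinearMap.ker (B1 : H2 →ₗ[ℝ] H4)).map (B2 : H2 →ₗ[ℝ] H5) with hV
  set v : H5 := A2 h1 - B2 h20 with hv
  have hvmem : v ∈ Vᗮᗮ := by
    rw [Submodule.mem_orthogonal]
    intro h5 h5mem
    -- B2* h5 ∈ (ker B1)ᗮ = K
    have hB2h5 : adjoint B2 h5 ∈ K := by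
      rw [← hkerorth, Submodule.mem_orthogonal']
      intro u hu
      rw [adjoint_inner_left B2 u h5, real_inner_comm]
      exact h5mem (B2 u) ⟨u, hu, rfl⟩
    obtain ⟨y, hy⟩ : ∃ y, adjoint B1 y = adjoint B2 h5 := hB2h5
    have hbsum : adjoint B1 (-y) + adjoint B2 h5 = 0 := by
      rw [map_neg, hy, neg_add_cancel]
    have hasum := hb (-y) h5 hbsum
    rw [map_neg, neg_add_eq_zero] at hasum
    -- hasum : adjoint A1 y = adjoint A2 h5
    show inner ℝ h5 v = 0
    rw [real_inner_comm, hv, inner_sub_left, ← adjoint_inner_right A2 h1 h5, ← hasum,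
        adjoint_inner_right A1 h1 y, ← adjoint_inner_right B2 h20 h5, ← hy,
        adjoint_inner_right B1 h20 y, hB1h20, sub_self]
  rw [Submodule.orthogonal_orthogonal_eq_closure] at hvmem
  have hvcl : v ∈ closure (V : Set H5) := by
    rw [← Submodule.topologicalClosure_coe]
    exact hvmem
  obtain ⟨w, hwV, hwd⟩ := Metric.mem_closure_iff.mp hvcl ε hε
  obtain ⟨k, hk, rfl⟩ := hwV
  refine ⟨h20 + k, ?_, ?_⟩
  · rw [map_add, hB1h20, show B1 k = 0 from hk, add_zero]
  · have : A2 h1 - B2 (h20 + k) = v - B2 k := by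
      rw [hv, map_add]; abel
    rw [this, ← dist_eq_norm]
    exact hwd.le
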